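/- The element y_0 y_1⁻¹ lies in the group S. -/
import Mathlib


/-- The Cantor set of infinite binary sequences. -/
abbrev Cantor : Type := ℕ → Bool

/-- Concatenation of a finite binary sequence with an infinite binary sequence. -/
def cat (s : List Bool) (η : Cantor) : Cantor :=
  fun n => if h : n < s.length then s.get ⟨n, h⟩ else η (n - s.length)

/-- `s` is a (finite) prefix of the infinite sequence `ξ`. -/
def IsPrefixOf (s : List Bool) (ξ : Cantor) : Prop := ∃ η : Cantor, ξ = cat s η

/-- The group of self-homeomorphisms of a topological space, with
`(f * g) ξ = f (g ξ)` (i.e. in the right-action convention `ξ·(g h) = (ξ·g)·h`,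
the product `g * f` corresponds to the word "apply `f`, then `g`"). -/
instance {α : Type*} [TopologicalSpace α] : Group (α ≃ₜ α) where
  mul f g := g.trans f
  one := Homeomorph.refl α
  inv := Homeomorph.symm
  mul_assoc _ _ _ := Homeomorph.ext fun _ => rfl
  one_mul _ := Homeomorph.ext fun _ => rfl
  mul_one _ := Homeomorph.ext fun _ => rfl
  inv_mul_cancel f := Homeomorph.ext fun ξ => f.symm_apply_apply ξ

@[simp] lemma homeo_mul_apply {α : Type*} [TopologicalSpace α] (f g : α ≃ₜ α) (ξ : α) :
    (f * g) ξ = f (g ξ) := rfl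

@[simp] lemma homeo_one_apply {α : Type*} [TopologicalSpace α] (ξ : α) :
    (1 : α ≃ₜ α) ξ = ξ := rfl

@[simp] lemma homeo_inv_apply {α : Type*} [TopologicalSpace α] (f : α ≃ₜ α) (ξ : α) :
    (f⁻¹ : α ≃ₜ α) ξ = f.symm ξ := rfl

/-- The data of the basic homeomorphisms `x`, `y`, `x_s`, `y_s`, `p_n` of the Cantor
set, together with their recursive defining equations. -/
structure LMData where
  x : Cantor ≃ₜ Cantor
  y : Cantor ≃ₜ Cantor
  xx : List Bool → Cantor ≃ₜ Cantor
  yy : List Bool → Cantor ≃ₜ Cantor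
  p : ℕ → Cantor ≃ₜ Cantor
  hx00 : ∀ η, x (cat [false, false] η) = cat [false] η
  hx01 : ∀ η, x (cat [false, true] η) = cat [true, false] η
  hx1 : ∀ η, x (cat [true] η) = cat [true, true] η
  hy00 : ∀ η, y (cat [false, false] η) = cat [false] (y η)
  hy01 : ∀ η, y (cat [false, true] η) = cat [true, false] (y.symm η)
  hy1 : ∀ η, y (cat [true] η) = cat [true, true] (y η)
  hxx : ∀ s η, xx s (cat s η) = cat s (x η)
  hxx' : ∀ s ξ, ¬ IsPrefixOf s ξ → xx s ξ = ξ
  hyy : ∀ s η, yy s (cat s η) = cat s (y η)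
  hyy' : ∀ s ξ, ¬ IsPrefixOf s ξ → yy s ξ = ξ
  hp1 : ∀ n k η, k < n → p n (cat (List.replicate k true ++ [false]) η) =
      cat (List.replicate (k + 1) true ++ [false]) η
  hp2 : ∀ n η, p n (cat (List.replicate n true ++ [false]) η) =
      cat (List.replicate (n + 1) true) η
  hp3 : ∀ n η, p n (cat (List.replicate (n + 1) true) η) = cat [false] η

/-- Thompson's group `T`, generated by all `x_s` and all `p_n`. -/
def Tgrp (D : LMData) : Subgroup (Cantor ≃ₜ Cantor) :=
  Subgroup.closure (Set.range D.xx ∪ Set.range D.p)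

/-- The group `Ŝ`, generated by all `x_s`, all `y_s` and all `p_n`. -/
def Shat (D : LMData) : Subgroup (Cantor ≃ₜ Cantor) :=
  Subgroup.closure (Set.range D.xx ∪ Set.range D.yy ∪ Set.range D.p)

/-- The homeomorphism `y₁₀ y₁₁₀⁻¹` (right-action word: first `y₁₀`, then `y₁₁₀⁻¹`). -/
def sgen (D : LMData) : Cantor ≃ₜ Cantor :=
  (D.yy [true, true, false])⁻¹ * D.yy [true, false]

/-- The group `S`, generated by Thompson's group `T` together with `y₁₀ y₁₁₀⁻¹`. -/
def Sgrp (D : LMData) : Subgroup (Cantor ≃ₜ Cantor) :=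
  Subgroup.closure (↑(Tgrp D) ∪ {sgen D})

/-- The Lodha–Moore group `_yG_y`, generated by all `x_s` and all `y_s`. -/
def LMgrp (D : LMData) : Subgroup (Cantor ≃ₜ Cantor) :=
  Subgroup.closure (Set.range D.xx ∪ Set.range D.yy)

section Basics
variable {η θ : Cantor}

lemma cat_nil (η : Cantor) : cat [] η = η := by
  funext n; simp [cat]

lemma cat_append (s t : List Bool) (η : Cantor) :
    cat (s ++ t) η = cat s (cat t η) := by
  funext n
  simp only [cat, List.length_append]
  by_cases h1 : n < s.length
  · rw [dif_pos (by omega), dif_pos h1]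
    simp only [List.get_eq_getElem]
    exact List.getElem_append_left h1
  · rw [dif_neg h1]
    by_cases h2 : n < s.length + t.length
    · rw [dif_pos h2, dif_pos (by omega)]
      simp only [List.get_eq_getElem]
      rw [List.getElem_append_right (by omega)]
    · rw [dif_neg h2, dif_neg (by omega)]
      congr 1; omega

lemma cat_cons (b : Bool) (L : List Bool) (η : Cantor) :
    cat (b :: L) η = cat [b] (cat L η) := cat_append [b] L η

lemma cat_single_zero (b : Bool) (θ : Cantor) : cat [b] θ 0 = b := rfl

lemma cat_single_succ (b : Bool) (θ : Cantor) (n : ℕ) : cat [b] θ (n + 1) = θ n := by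
  simp [cat]

lemma cat_single_inj {b c : Bool} {θ θ' : Cantor} :
    cat [b] θ = cat [c] θ' ↔ b = c ∧ θ = θ' := by
  constructor
  · intro h
    refine ⟨congrFun h 0, funext fun n => ?_⟩
    have := congrFun h (n + 1)
    simpa [cat_single_succ] using this
  · rintro ⟨rfl, rfl⟩; rfl

lemma prefix_nil (ξ : Cantor) : IsPrefixOf [] ξ := ⟨ξ, (cat_nil ξ).symm⟩

lemma prefix_cons_iff {a : Bool} {u : List Bool} {b : Bool} {θ : Cantor} :
    IsPrefixOf (a :: u) (cat [b] θ) ↔ a = b ∧ IsPrefixOf u θ := by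
  constructor
  · rintro ⟨η, h⟩
    rw [cat_cons a u η, cat_single_inj] at h
    exact ⟨h.1.symm, η, h.2⟩
  · rintro ⟨rfl, η, rfl⟩
    exact ⟨η, (cat_cons a u η).symm⟩

@[simp] lemma prefix_reduce {a : Bool} {u : List Bool} {b : Bool} {L : List Bool} {η : Cantor} :
    IsPrefixOf (a :: u) (cat (b :: L) η) ↔ a = b ∧ IsPrefixOf u (cat L η) := by
  rw [cat_cons]; exact prefix_cons_iff

lemma exists_head (ξ : Cantor) : ξ = cat [ξ 0] (fun n => ξ (n + 1)) := by
  funext n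
  cases n with
  | zero => rfl
  | succ n => rw [cat_single_succ]

lemma decomp3 (ξ : Cantor) : ∃ (b0 b1 b2 : Bool) (η : Cantor), ξ = cat [b0, b1, b2] η := by
  obtain ⟨η0, h0⟩ : ∃ η0, ξ = cat [ξ 0] η0 := ⟨_, exists_head ξ⟩
  obtain ⟨η1, h1⟩ : ∃ η1, η0 = cat [η0 0] η1 := ⟨_, exists_head η0⟩
  obtain ⟨η2, h2⟩ : ∃ η2, η1 = cat [η1 0] η2 := ⟨_, exists_head η1⟩
  refine ⟨ξ 0, η0 0, η1 0, η2, ?_⟩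
  rw [cat_cons, cat_cons ((η0 : Cantor) 0), ← h2, ← h1, ← h0]

lemma not_prefix_of_ne_head (s : List Bool) {b c : Bool} (h : b ≠ c)
    (u v : List Bool) (θ : Cantor) :
    ¬ IsPrefixOf (s ++ b :: u) (cat (s ++ c :: v) θ) := by
  induction s with
  | nil =>
    simp only [List.nil_append, prefix_reduce]
    rintro ⟨rfl, -⟩; exact h rfl
  | cons a s ih =>
    simp only [List.cons_append, prefix_reduce]
    rintro ⟨-, hp⟩; exact ih hp

lemma not_prefix_append {s t : List Bool} {ξ : Cantor} (h : ¬ IsPrefixOf s ξ) :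
    ¬ IsPrefixOf (s ++ t) ξ := by
  rintro ⟨η, rfl⟩
  exact h ⟨cat t η, cat_append s t η⟩

end Basics
section Rules
variable (D : LMData)

-- x rules in cons form
lemma xr00 (l : List Bool) (η : Cantor) :
    D.x (cat (false :: false :: l) η) = cat (false :: l) η := by
  rw [show (false :: false :: l) = [false, false] ++ l from rfl, cat_append, D.hx00,
    ← cat_append]; rfl

lemma xr01 (l : List Bool) (η : Cantor) :
    D.x (cat (false :: true :: l) η) = cat (true :: false :: l) η := by
  rw [show (false :: true :: l) = [false, true] ++ l from rfl, cat_append, D.hx01,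
    ← cat_append]; rfl

lemma xr1 (l : List Bool) (η : Cantor) :
    D.x (cat (true :: l) η) = cat (true :: true :: l) η := by
  rw [show (true :: l) = [true] ++ l from rfl, cat_append, D.hx1, ← cat_append]; rfl

lemma xs0 (l : List Bool) (η : Cantor) :
    D.x.symm (cat (false :: l) η) = cat (false :: false :: l) η := by
  rw [← xr00]; exact D.x.symm_apply_apply _

lemma xs10 (l : List Bool) (η : Cantor) :
    D.x.symm (cat (true :: false :: l) η) = cat (false :: true :: l) η := by
  rw [← xr01]; exact D.x.symm_apply_apply _

lemma xs11 (l : List Bool) (η : Cantor) :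
    D.x.symm (cat (true :: true :: l) η) = cat (true :: l) η := by
  rw [← xr1]; exact D.x.symm_apply_apply _

lemma xx_nil : D.xx [] = D.x := by
  refine Homeomorph.ext fun ξ => ?_
  have := D.hxx [] ξ
  rwa [cat_nil, cat_nil] at this

-- xx [false] rules
lemma xx0_rule (l : List Bool) (η : Cantor) :
    D.xx [false] (cat (false :: l) η) = cat [false] (D.x (cat l η)) := by
  rw [cat_cons]; exact D.hxx [false] (cat l η)

lemma xx0_00 (l : List Bool) (η : Cantor) :
    D.xx [false] (cat (false :: false :: false :: l) η) = cat (false :: false :: l) η := by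
  rw [xx0_rule, xr00, ← cat_cons]

lemma xx0_01 (l : List Bool) (η : Cantor) :
    D.xx [false] (cat (false :: false :: true :: l) η) = cat (false :: true :: false :: l) η := by
  rw [xx0_rule, xr01, ← cat_cons]

lemma xx0_1 (l : List Bool) (η : Cantor) :
    D.xx [false] (cat (false :: true :: l) η) = cat (false :: true :: true :: l) η := by
  rw [xx0_rule, xr1, ← cat_cons]

lemma xx0_fixT (l : List Bool) (η : Cantor) :
    D.xx [false] (cat (true :: l) η) = cat (true :: l) η := by
  apply D.hxx'
  exact not_prefix_of_ne_head [] (by simp) [] l η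

-- p 0 rules
lemma p0_f (l : List Bool) (η : Cantor) :
    D.p 0 (cat (false :: l) η) = cat (true :: l) η := by
  have := D.hp2 0 (cat l η)
  simp only [List.replicate, List.nil_append] at this
  rw [← cat_append, ← cat_append] at this; simpa using this

lemma p0_t (l : List Bool) (η : Cantor) :
    D.p 0 (cat (true :: l) η) = cat (false :: l) η := by
  have := D.hp3 0 (cat l η)
  simp only [List.replicate] at this
  rw [← cat_append, ← cat_append] at this; simpa using this

-- p 2 rules
lemma p2_0 (l : List Bool) (η : Cantor) :
    D.p 2 (cat (false :: l) η) = cat (true :: false :: l) η := by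
  have := D.hp1 2 0 (cat l η) (by omega)
  simp only [List.replicate, List.nil_append, List.cons_append] at this
  rw [← cat_append, ← cat_append] at this; simpa using this

lemma p2_10 (l : List Bool) (η : Cantor) :
    D.p 2 (cat (true :: false :: l) η) = cat (true :: true :: false :: l) η := by
  have := D.hp1 2 1 (cat l η) (by omega)
  simp only [List.replicate, List.nil_append, List.cons_append] at this
  rw [← cat_append, ← cat_append] at this; simpa using this

lemma p2_110 (l : List Bool) (η : Cantor) :
    D.p 2 (cat (true :: true :: false :: l) η) = cat (true :: true :: true :: l) η := by
  have := D.hp2 2 (cat l η)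
  simp only [List.replicate, List.nil_append, List.cons_append] at this
  rw [← cat_append, ← cat_append] at this; simpa using this

lemma p2_111 (l : List Bool) (η : Cantor) :
    D.p 2 (cat (true :: true :: true :: l) η) = cat (false :: l) η := by
  have := D.hp3 2 (cat l η)
  simp only [List.replicate, List.nil_append, List.cons_append] at this
  rw [← cat_append, ← cat_append] at this; simpa using this

end Rules
section Conj
variable (D : LMData)

/-- The conjugator `f = x₀ ∘ x⁻¹` (Lean product: apply `x⁻¹` then `x₀`). -/
def fconj : Cantor ≃ₜ Cantor := D.xx [false] * (D.xx [])⁻¹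

lemma fconj_apply (ξ : Cantor) : fconj D ξ = D.xx [false] (D.x.symm ξ) := by
  simp [fconj, xx_nil]

lemma f_00 (l : List Bool) (η : Cantor) :
    fconj D (cat (false :: false :: l) η) = cat (false :: false :: l) η := by
  rw [fconj_apply, xs0, xx0_00]

lemma f_01 (l : List Bool) (η : Cantor) :
    fconj D (cat (false :: true :: l) η) = cat (false :: true :: false :: l) η := by
  rw [fconj_apply, xs0, xx0_01]

lemma f_10 (l : List Bool) (η : Cantor) :
    fconj D (cat (true :: false :: l) η) = cat (false :: true :: true :: l) η := by
  rw [fconj_apply, xs10, xx0_1]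

lemma f_110 (l : List Bool) (η : Cantor) :
    fconj D (cat (true :: true :: false :: l) η) = cat (true :: false :: l) η := by
  rw [fconj_apply, xs11, xx0_fixT]

lemma f_111 (l : List Bool) (η : Cantor) :
    fconj D (cat (true :: true :: true :: l) η) = cat (true :: true :: l) η := by
  rw [fconj_apply, xs11, xx0_fixT]

-- yy helper lemmas
lemma yy_symm_cat (s : List Bool) (θ : Cantor) :
    (D.yy s).symm (cat s θ) = cat s (D.y.symm θ) := by
  have h := D.hyy s (D.y.symm θ)
  rw [D.y.apply_symm_apply] at h
  rw [← h, Homeomorph.symm_apply_apply]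

lemma yy_symm_fix (s : List Bool) (ξ : Cantor) (h : ¬ IsPrefixOf s ξ) :
    (D.yy s).symm ξ = ξ := by
  conv_lhs => rw [← D.hyy' s ξ h]
  exact Homeomorph.symm_apply_apply _ _

/-- Conjugation lemma: if `g` maps the cylinder `a` canonically onto the cylinder `b`
and only points of cylinder `a` land in cylinder `b`, then `g (yy a) g⁻¹ = yy b`. -/
lemma conj_yy (g : Cantor ≃ₜ Cantor) (a b : List Bool)
    (h1 : ∀ η, g (cat a η) = cat b η)
    (h2 : ∀ ξ, IsPrefixOf b (g ξ) → IsPrefixOf a ξ) :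
    g * D.yy a * g⁻¹ = D.yy b := by
  refine Homeomorph.ext fun ξ => ?_
  show g ((D.yy a) (g.symm ξ)) = D.yy b ξ
  by_cases ha : IsPrefixOf a (g.symm ξ)
  · obtain ⟨η, he⟩ := ha
    have hξ : ξ = cat b η := by
      conv_lhs => rw [← g.apply_symm_apply ξ, he, h1]
    rw [he, D.hyy, h1, hξ, D.hyy]
  · rw [D.hyy' a _ ha, g.apply_symm_apply]
    refine (D.hyy' b ξ ?_).symm
    intro hb
    exact ha (by simpa using h2 (g.symm ξ) (by rwa [g.apply_symm_apply]))

/-- Disjointly supported `yy`'s commute. -/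
lemma yy_comm (a b : List Bool)
    (hab : ∀ ξ : Cantor, IsPrefixOf a ξ → IsPrefixOf b ξ → False) :
    Commute (D.yy a) (D.yy b) := by
  refine Homeomorph.ext fun ξ => ?_
  show (D.yy a) ((D.yy b) ξ) = (D.yy b) ((D.yy a) ξ)
  by_cases ha : IsPrefixOf a ξ
  · obtain ⟨η, rfl⟩ := ha
    have hb : ¬ IsPrefixOf b (cat a η) := fun h => hab _ ⟨η, rfl⟩ h
    have hb' : ¬ IsPrefixOf b (cat a (D.y η)) := fun h => hab _ ⟨_, rfl⟩ h
    rw [D.hyy' b _ hb, D.hyy a η, D.hyy' b _ hb']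
  · by_cases hb : IsPrefixOf b ξ
    · obtain ⟨η, rfl⟩ := hb
      have ha' : ¬ IsPrefixOf a (cat b (D.y η)) := fun h => hab _ h ⟨_, rfl⟩
      rw [D.hyy b η, D.hyy' a _ ha, D.hyy' a _ ha', D.hyy b η]
    · rw [D.hyy' b ξ hb, D.hyy' a ξ ha, D.hyy' b ξ hb]

end Conj
section Spec
variable (D : LMData)

@[simp] lemma prefix_nil_iff (ξ : Cantor) : IsPrefixOf [] ξ ↔ True :=
  ⟨fun _ => trivial, fun _ => prefix_nil ξ⟩

lemma conj_p0_110 : D.p 0 * D.yy [true, true, false] * (D.p 0)⁻¹ = D.yy [false, true, false] := by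
  refine conj_yy D _ _ _ (fun η => p0_t D _ η) ?_
  intro ξ h
  obtain ⟨b0, b1, b2, η, rfl⟩ := decomp3 ξ
  cases b0 <;> cases b1 <;> cases b2 <;>
    simp only [p0_f, p0_t] at h <;> simp_all

lemma conj_p0_10 : D.p 0 * D.yy [true, false] * (D.p 0)⁻¹ = D.yy [false, false] := by
  refine conj_yy D _ _ _ (fun η => p0_t D _ η) ?_
  intro ξ h
  obtain ⟨b0, b1, b2, η, rfl⟩ := decomp3 ξ
  cases b0 <;> cases b1 <;> cases b2 <;>
    simp only [p0_f, p0_t] at h <;> simp_all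

lemma conj_p2_110 : D.p 2 * D.yy [true, true, false] * (D.p 2)⁻¹ = D.yy [true, true, true] := by
  refine conj_yy D _ _ _ (fun η => p2_110 D _ η) ?_
  intro ξ h
  obtain ⟨b0, b1, b2, η, rfl⟩ := decomp3 ξ
  cases b0 <;> cases b1 <;> cases b2 <;>
    simp only [p2_0, p2_10, p2_110, p2_111] at h <;> simp_all

lemma conj_p2_10 : D.p 2 * D.yy [true, false] * (D.p 2)⁻¹ = D.yy [true, true, false] := by
  refine conj_yy D _ _ _ (fun η => p2_10 D _ η) ?_
  intro ξ h
  obtain ⟨b0, b1, b2, η, rfl⟩ := decomp3 ξ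
  cases b0 <;> cases b1 <;> cases b2 <;>
    simp only [p2_0, p2_10, p2_110, p2_111] at h <;> simp_all

lemma conj_f_110 : fconj D * D.yy [true, true, false] * (fconj D)⁻¹ = D.yy [true, false] := by
  refine conj_yy D _ _ _ (fun η => f_110 D _ η) ?_
  intro ξ h
  obtain ⟨b0, b1, b2, η, rfl⟩ := decomp3 ξ
  cases b0 <;> cases b1 <;> cases b2 <;>
    simp only [f_00, f_01, f_10, f_110, f_111] at h <;> simp_all

lemma conj_f_10 : fconj D * D.yy [true, false] * (fconj D)⁻¹ = D.yy [false, true, true] := by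
  refine conj_yy D _ _ _ (fun η => f_10 D _ η) ?_
  intro ξ h
  obtain ⟨b0, b1, b2, η, rfl⟩ := decomp3 ξ
  cases b0 <;> cases b1 <;> cases b2 <;>
    simp only [f_00, f_01, f_10, f_110, f_111] at h <;> simp_all

end Spec
section Decomp
variable (D : LMData)

lemma decomp2 (ξ : Cantor) : ∃ (b0 b1 : Bool) (η : Cantor), ξ = cat [b0, b1] η := by
  obtain ⟨η0, h0⟩ : ∃ η0, ξ = cat [ξ 0] η0 := ⟨_, exists_head ξ⟩
  obtain ⟨η1, h1⟩ : ∃ η1, η0 = cat [η0 0] η1 := ⟨_, exists_head η0⟩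
  refine ⟨ξ 0, η0 0, η1, ?_⟩
  rw [cat_cons, ← h1, ← h0]

lemma cat_merge (s t : List Bool) (η : Cantor) : cat s (cat t η) = cat (s ++ t) η :=
  (cat_append s t η).symm

/-- The basic Lodha–Moore relation `y_s = y_{s11} y_{s10}⁻¹ y_{s0} x_s`
(right-action word: apply `x_s` first). -/
lemma yy_decomp (s : List Bool) :
    D.yy s = D.yy (s ++ [true, true]) * (D.yy (s ++ [true, false]))⁻¹ *
      D.yy (s ++ [false]) * D.xx s := by
  refine Homeomorph.ext fun ξ => ?_
  show D.yy s ξ =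
    D.yy (s ++ [true, true]) ((D.yy (s ++ [true, false])).symm
      (D.yy (s ++ [false]) (D.xx s ξ)))
  by_cases hs : IsPrefixOf s ξ
  · obtain ⟨η, rfl⟩ := hs
    obtain ⟨b0, b1, θ, rfl⟩ := decomp2 η
    cases b0
    · cases b1
      · -- η = 00θ
        rw [D.hxx s (cat [false, false] θ), D.hx00 θ, cat_merge s [false] θ,
          D.hyy (s ++ [false]) θ,
          yy_symm_fix D (s ++ [true, false]) _
            (not_prefix_of_ne_head s (show true ≠ false by simp) [false] [] (D.y θ)),
          D.hyy' (s ++ [true, true]) _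
            (not_prefix_of_ne_head s (show true ≠ false by simp) [true] [] (D.y θ)),
          D.hyy s (cat [false, false] θ), D.hy00 θ, cat_merge s [false] (D.y θ)]
      · -- η = 01θ
        rw [D.hxx s (cat [false, true] θ), D.hx01 θ, cat_merge s [true, false] θ,
          D.hyy' (s ++ [false]) _
            (not_prefix_of_ne_head s (show false ≠ true by simp) [] [false] θ),
          yy_symm_cat D (s ++ [true, false]) θ,
          D.hyy' (s ++ [true, true]) _ (by
            have := not_prefix_of_ne_head (s ++ [true]) (show true ≠ false by simp)
              [] [] (D.y.symm θ)
            simpa [List.append_assoc] using this),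
          D.hyy s (cat [false, true] θ), D.hy01 θ, cat_merge s [true, false] (D.y.symm θ)]
    · -- η = 1 b1 θ
      rw [cat_cons true [b1] θ,
        D.hxx s (cat [true] (cat [b1] θ)), D.hx1 (cat [b1] θ),
        cat_merge s [true, true] (cat [b1] θ),
        D.hyy' (s ++ [false]) _
          (not_prefix_of_ne_head s (show false ≠ true by simp) [] [true] (cat [b1] θ)),
        yy_symm_fix D (s ++ [true, false]) _ (by
          have := not_prefix_of_ne_head (s ++ [true]) (show false ≠ true by simp)
            [] [] (cat [b1] θ)
          simpa [List.append_assoc] using this),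
        D.hyy (s ++ [true, true]) (cat [b1] θ),
        D.hyy s (cat [true] (cat [b1] θ)), D.hy1 (cat [b1] θ),
        cat_merge s [true, true] (D.y (cat [b1] θ))]
  · rw [D.hxx' s ξ hs,
      D.hyy' (s ++ [false]) ξ (not_prefix_append hs),
      yy_symm_fix D (s ++ [true, false]) ξ (not_prefix_append hs),
      D.hyy' (s ++ [true, true]) ξ (not_prefix_append hs),
      D.hyy' s ξ hs]

end Decomp
section Assemble

/-- Abstract group-theoretic assembly of the final identity. -/
lemma assemble {G : Type*} [Group G] (X0 X1 Y00 Y010 Y011 Y10 Y110 Y111 : G)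
    (c1 : Commute Y011 Y110) (c2 : Commute Y011 Y111) (c3 : Commute Y110 Y111) :
    (Y111 * Y110⁻¹ * Y10 * X1)⁻¹ * (Y011 * Y010⁻¹ * Y00 * X0) =
      X1⁻¹ * (Y10⁻¹ * Y011) * (Y111⁻¹ * Y110) * (Y010⁻¹ * Y00) * X0 := by
  have key : Y110 * Y111⁻¹ * Y011 = Y011 * Y111⁻¹ * Y110 := by
    rw [c3.inv_right.eq, mul_assoc, c1.symm.eq, ← mul_assoc, (c2.symm.inv_left).eq]
  have key' : ∀ z : G, Y110 * (Y111⁻¹ * (Y011 * z)) = Y011 * (Y111⁻¹ * (Y110 * z)) := by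
    intro z
    calc Y110 * (Y111⁻¹ * (Y011 * z)) = Y110 * Y111⁻¹ * Y011 * z := by
          simp only [mul_assoc]
      _ = Y011 * Y111⁻¹ * Y110 * z := by rw [key]
      _ = Y011 * (Y111⁻¹ * (Y110 * z)) := by simp only [mul_assoc]
  simp only [mul_inv_rev, inv_inv, mul_assoc]
  rw [key']

variable (D : LMData)

lemma comm1 : Commute (D.yy [false, true, true]) (D.yy [true, true, false]) := by
  refine yy_comm D _ _ ?_
  rintro ξ ⟨η, rfl⟩ hb
  simp at hb

lemma comm2 : Commute (D.yy [false, true, true]) (D.yy [true, true, true]) := by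
  refine yy_comm D _ _ ?_
  rintro ξ ⟨η, rfl⟩ hb
  simp at hb

lemma comm3 : Commute (D.yy [true, true, false]) (D.yy [true, true, true]) := by
  refine yy_comm D _ _ ?_
  rintro ξ ⟨η, rfl⟩ hb
  simp at hb

lemma conj_sgen (g : Cantor ≃ₜ Cantor) (b b' : List Bool)
    (h110 : g * D.yy [true, true, false] * g⁻¹ = D.yy b')
    (h10 : g * D.yy [true, false] * g⁻¹ = D.yy b) :
    g * sgen D * g⁻¹ = (D.yy b')⁻¹ * D.yy b := by
  rw [← h110, ← h10]
  simp only [sgen, mul_inv_rev, inv_inv]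
  group

end Assemble

/-- the element `y₀ y₁⁻¹` (right-action word: first `y₀`, then `y₁⁻¹`)
lies in `S`. -/
theorem statement17 (D : LMData) :
    (D.yy [true])⁻¹ * D.yy [false] ∈ Sgrp D := by
  have hT : ∀ g ∈ Tgrp D, g ∈ Sgrp D := fun g hg => Subgroup.subset_closure (Or.inl hg)
  have hxxS : ∀ s, D.xx s ∈ Sgrp D :=
    fun s => hT _ (Subgroup.subset_closure (Or.inl ⟨s, rfl⟩))
  have hpS : ∀ n, D.p n ∈ Sgrp D :=
    fun n => hT _ (Subgroup.subset_closure (Or.inr ⟨n, rfl⟩))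
  have hsgen : sgen D ∈ Sgrp D := Subgroup.subset_closure (Or.inr rfl)
  have hfS : fconj D ∈ Sgrp D := mul_mem (hxxS [false]) (inv_mem (hxxS []))
  have hA := conj_sgen D (fconj D) [false, true, true] [true, false]
    (conj_f_110 D) (conj_f_10 D)
  have hB := conj_sgen D (D.p 2) [true, true, false] [true, true, true]
    (conj_p2_110 D) (conj_p2_10 D)
  have hC := conj_sgen D (D.p 0) [false, false] [false, true, false]
    (conj_p0_110 D) (conj_p0_10 D)
  have main : (D.yy [true])⁻¹ * D.yy [false] =
      (D.xx [true])⁻¹ * (fconj D * sgen D * (fconj D)⁻¹) *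
        (D.p 2 * sgen D * (D.p 2)⁻¹) * (D.p 0 * sgen D * (D.p 0)⁻¹) * D.xx [false] := by
    rw [hA, hB, hC, yy_decomp D [true], yy_decomp D [false]]
    simp only [List.cons_append, List.nil_append]
    exact assemble _ _ _ _ _ _ _ _ (comm1 D) (comm2 D) (comm3 D)
  rw [main]
  exact mul_mem (mul_mem (mul_mem (mul_mem (inv_mem (hxxS [true]))
    (mul_mem (mul_mem hfS hsgen) (inv_mem hfS)))
    (mul_mem (mul_mem (hpS 2) hsgen) (inv_mem (hpS 2))))
    (mul_mem (mul_mem (hpS 0) hsgen) (inv_mem (hpS 0)))) (hxxS [false])
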